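/- arXiv:2012.03173 — 5 statements merged into one kernel-verified Lean document; each statement's English description precedes it below -/
import Mathlib

section
/- Inner maximization of the AUC-margin objective: for all a, b ∈ ℝ, the supremum over α ∈ [0,∞) of E_μ[F_M(a,b,α)] equals p(1−p)·( E_{μ₊}[(S − a)²] + E_{μ₋}[(S − b)²] + (max(m + b(S) − a(S), 0))² ). -/
open MeasureTheory ProbabilityTheory

/-- The AUC-margin integrand
`F_M(a,b,α) = (1−p)(S−a)²·1_A + p(S−b)²·1_{Aᶜ} − p(1−p)α² + 2α(p(1−p)m + p·S·1_{Aᶜ} − (1−p)·S·1_A)`. -/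
noncomputable def FM {Ω : Type*} (A : Set Ω) (p m : ℝ) (S : Ω → ℝ)
    (a b α : ℝ) (ω : Ω) : ℝ :=
  (1 - p) * (S ω - a) ^ 2 * A.indicator 1 ω
    + p * (S ω - b) ^ 2 * Aᶜ.indicator 1 ω
    - p * (1 - p) * α ^ 2
    + 2 * α * (p * (1 - p) * m + p * S ω * Aᶜ.indicator 1 ω
        - (1 - p) * S ω * A.indicator 1 ω)

private lemma cond_int_eq {Ω : Type*} [MeasurableSpace Ω] (μ : Measure Ω)
    (A : Set Ω) (f : Ω → ℝ) :
    ∫ ω, f ω ∂μ[|A] = ((μ A).toReal)⁻¹ * ∫ ω in A, f ω ∂μ := by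
  rw [ProbabilityTheory.cond, integral_smul_measure, ENNReal.toReal_inv, smul_eq_mul]

/-- Inner maximization of the AUC-margin objective: for all `a, b ∈ ℝ`, the supremum over
`α ∈ [0,∞)` of `E_μ[F_M(a,b,α)]` equals
`p(1−p)·(E_{μ₊}[(S−a)²] + E_{μ₋}[(S−b)²] + (max(m + b(S) − a(S), 0))²)`. -/
theorem inner_max_AUC_margin
    {Ω : Type*} [MeasurableSpace Ω] (μ : Measure Ω) [IsProbabilityMeasure μ]
    (A : Set Ω) (hA : MeasurableSet A)
    (p : ℝ) (hp : p = (μ A).toReal) (hp0 : 0 < p) (hp1 : p < 1)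
    (S : Ω → ℝ) (hS : MemLp S 2 μ) (m : ℝ) :
    ∀ a b : ℝ,
      sSup ((fun α : ℝ => ∫ ω, FM A p m S a b α ω ∂μ) '' Set.Ici 0)
        = p * (1 - p) *
          ((∫ ω, (S ω - a) ^ 2 ∂μ[|A]) + (∫ ω, (S ω - b) ^ 2 ∂μ[|Aᶜ])
            + max (m + (∫ ω, S ω ∂μ[|Aᶜ]) - (∫ ω, S ω ∂μ[|A])) 0 ^ 2) := by
  intro a b
  have hμA : (μ A).toReal = p := hp.symm
  have hμAc : (μ Aᶜ).toReal = 1 - p := by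
    rw [measure_compl hA (measure_ne_top μ A), measure_univ,
      ENNReal.toReal_sub_of_le prob_le_one (by simp), ENNReal.toReal_one, hμA]
  -- conditional expectation names
  set Ea : ℝ := ∫ ω, (S ω - a) ^ 2 ∂μ[|A] with hEa
  set Eb : ℝ := ∫ ω, (S ω - b) ^ 2 ∂μ[|Aᶜ] with hEb
  set sa : ℝ := ∫ ω, S ω ∂μ[|A] with hsa
  set sb : ℝ := ∫ ω, S ω ∂μ[|Aᶜ] with hsb
  set d : ℝ := m + sb - sa with hd
  set c : ℝ := p * (1 - p) with hc
  set K : ℝ := c * (Ea + Eb) with hK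
  have hp1' : (0:ℝ) < 1 - p := by linarith
  have hcpos : 0 < c := mul_pos hp0 hp1'
  -- integrability facts
  have hSa : MemLp (fun ω => S ω - a) 2 μ := hS.sub (memLp_const a)
  have hSb : MemLp (fun ω => S ω - b) 2 μ := hS.sub (memLp_const b)
  have hIa : Integrable (fun ω => (S ω - a) ^ 2) μ := hSa.integrable_sq
  have hIb : Integrable (fun ω => (S ω - b) ^ 2) μ := hSb.integrable_sq
  have hIS : Integrable S μ := hS.integrable one_le_two
  have h1 : Integrable (A.indicator fun ω => (S ω - a) ^ 2) μ := hIa.indicator hA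
  have h2 : Integrable (Aᶜ.indicator fun ω => (S ω - b) ^ 2) μ := hIb.indicator hA.compl
  have h3 : Integrable (Aᶜ.indicator S) μ := hIS.indicator hA.compl
  have h4 : Integrable (A.indicator S) μ := hIS.indicator hA
  -- relate set integrals with conditional integrals
  have hcEa : p * Ea = ∫ ω in A, (S ω - a) ^ 2 ∂μ := by
    rw [hEa, cond_int_eq, hμA]; field_simp
  have hcEb : (1 - p) * Eb = ∫ ω in Aᶜ, (S ω - b) ^ 2 ∂μ := by
    rw [hEb, cond_int_eq, hμAc]; field_simp
  have hcsa : p * sa = ∫ ω in A, S ω ∂μ := by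
    rw [hsa, cond_int_eq, hμA]; field_simp
  have hcsb : (1 - p) * sb = ∫ ω in Aᶜ, S ω ∂μ := by
    rw [hsb, cond_int_eq, hμAc]; field_simp
  -- compute the integral of FM for each α
  have key : ∀ α : ℝ, (∫ ω, FM A p m S a b α ω ∂μ) = K + c * (2 * α * d - α ^ 2) := by
    intro α
    have hpt : ∀ ω, FM A p m S a b α ω =
        (1 - p) * (A.indicator (fun ω => (S ω - a) ^ 2) ω)
        + p * (Aᶜ.indicator (fun ω => (S ω - b) ^ 2) ω)
        + (2 * α * p) * (Aᶜ.indicator S ω)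
        + (-(2 * α * (1 - p))) * (A.indicator S ω)
        + (2 * α * p * (1 - p) * m - p * (1 - p) * α ^ 2) := by
      intro ω
      by_cases h : ω ∈ A <;>
        simp [FM, Set.indicator, h] <;> ring
    have i1 : Integrable (fun ω => (1 - p) * A.indicator (fun ω => (S ω - a) ^ 2) ω) μ :=
      h1.const_mul _
    have i2 : Integrable (fun ω => (1 - p) * A.indicator (fun ω => (S ω - a) ^ 2) ω
        + p * Aᶜ.indicator (fun ω => (S ω - b) ^ 2) ω) μ := by
      exact i1.add (h2.const_mul _)
    have i3 : Integrable (fun ω => (1 - p) * A.indicator (fun ω => (S ω - a) ^ 2) ω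
        + p * Aᶜ.indicator (fun ω => (S ω - b) ^ 2) ω
        + 2 * α * p * Aᶜ.indicator S ω) μ := by
      exact i2.add (h3.const_mul _)
    have i4 : Integrable (fun ω => (1 - p) * A.indicator (fun ω => (S ω - a) ^ 2) ω
        + p * Aᶜ.indicator (fun ω => (S ω - b) ^ 2) ω
        + 2 * α * p * Aᶜ.indicator S ω
        + -(2 * α * (1 - p)) * A.indicator S ω) μ := by
      exact i3.add (h4.const_mul _)
    rw [integral_congr_ae (Filter.Eventually.of_forall hpt),
      integral_add i4 (integrable_const _),
      integral_add i3 (h4.const_mul _),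
      integral_add i2 (h3.const_mul _),
      integral_add i1 (h2.const_mul _),
      integral_const_mul, integral_const_mul, integral_const_mul, integral_const_mul,
      integral_const, integral_indicator hA, integral_indicator hA.compl,
      integral_indicator hA, integral_indicator hA.compl,
      ← hcEa, ← hcEb, ← hcsa, ← hcsb]
    simp only [probReal_univ, smul_eq_mul, one_mul]
    rw [hK, hc, hd]; ring
  have hfun : (fun α : ℝ => ∫ ω, FM A p m S a b α ω ∂μ)
      = fun α => K + c * (2 * α * d - α ^ 2) := funext key
  rw [hfun]
  have hgreat : IsGreatest ((fun α => K + c * (2 * α * d - α ^ 2)) '' Set.Ici 0)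
      (K + c * (max d 0) ^ 2) := by
    constructor
    · refine ⟨max d 0, Set.mem_Ici.mpr (le_max_right _ _), ?_⟩
      rcases le_or_gt d 0 with h | h
      · rw [max_eq_right h]; ring
      · rw [max_eq_left h.le]; ring
    · rintro x ⟨α, hα, rfl⟩
      have hα0 : (0:ℝ) ≤ α := hα
      have hle : 2 * α * d - α ^ 2 ≤ (max d 0) ^ 2 := by
        rcases le_or_gt d 0 with h | h
        · rw [max_eq_right h]; nlinarith
        · rw [max_eq_left h.le]; nlinarith [sq_nonneg (α - d)]
      exact add_le_add (le_refl K) (mul_le_mul_of_nonneg_left hle hcpos.le)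
  rw [hgreat.csSup_eq, hK]; ring
end

section
/- Theorem 1 (min-max equivalence for the AUC margin loss): the infimum over (a,b) ∈ ℝ² of the supremum over α ∈ [0,∞) of E_μ[F_M(a,b,α)] equals p(1−p)·A_M, and this infimum over (a,b) is attained. -/
open MeasureTheory ProbabilityTheory

section Helpers

variable {Ω : Type*} [MeasurableSpace Ω]

lemma mul_indicator_eq_indicator (A : Set Ω) (f : Ω → ℝ) :
    (fun ω => f ω * A.indicator 1 ω) = A.indicator f := by
  funext ω
  by_cases h : ω ∈ A <;> simp [h]

lemma integrable_mul_indicator {μ : Measure Ω} {A : Set Ω} (hA : MeasurableSet A)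
    {f : Ω → ℝ} (hf : Integrable f μ) :
    Integrable (fun ω => f ω * A.indicator 1 ω) μ := by
  rw [mul_indicator_eq_indicator]
  exact hf.indicator hA

lemma integral_mul_indicator' (μ : Measure Ω) {A : Set Ω} (hA : MeasurableSet A)
    (hA0 : μ A ≠ 0) (hA' : μ A ≠ ⊤) (f : Ω → ℝ) :
    ∫ ω, f ω * A.indicator 1 ω ∂μ = (μ A).toReal * ∫ ω, f ω ∂μ[|A] := by
  rw [mul_indicator_eq_indicator, integral_indicator hA,
    show μ[|A] = (μ A)⁻¹ • μ.restrict A from rfl, integral_smul_measure,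
    ENNReal.toReal_inv, smul_eq_mul, ← mul_assoc,
    mul_inv_cancel₀ (ENNReal.toReal_ne_zero.2 ⟨hA0, hA'⟩), one_mul]

lemma memℒp_cond {μ : Measure Ω} {A : Set Ω} (hA0 : μ A ≠ 0)
    {S : Ω → ℝ} (hS : MemLp S 2 μ) : MemLp S 2 μ[|A] :=
  (hS.restrict A).smul_measure (ENNReal.inv_ne_top.2 hA0)

lemma sq_integral_decomp (ν : Measure Ω) [IsProbabilityMeasure ν]
    {S : Ω → ℝ} (hS : MemLp S 2 ν) (a c : ℝ) (hc : c = ∫ ω, S ω ∂ν) :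
    ∫ ω, (S ω - a) ^ 2 ∂ν = (∫ ω, (S ω - c) ^ 2 ∂ν) + (c - a) ^ 2 := by
  have hsq : ∀ b : ℝ, Integrable (fun ω => (S ω - b) ^ 2) ν := fun b =>
    (hS.sub (memLp_const b)).integrable_sq
  have hint : Integrable S ν := hS.integrable one_le_two
  have key : (fun ω => (S ω - a) ^ 2) =
      fun ω => (S ω - c) ^ 2 + ((2 * (c - a)) * S ω + (a - c) * (a + c)) := by
    funext ω; ring
  have hg : Integrable (fun ω => (2 * (c - a)) * S ω + (a - c) * (a + c)) ν :=
    (hint.const_mul _).add (integrable_const _)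
  rw [key, integral_add (hsq c) hg,
    integral_add (hint.const_mul _) (integrable_const _),
    integral_const_mul, integral_const, probReal_univ, smul_eq_mul,
    ← hc]
  ring

lemma sSup_quadratic (d K c : ℝ) (hd : 0 < d) :
    sSup ((fun α : ℝ => d * (K + 2 * α * c - α ^ 2)) '' Set.Ici 0)
      = d * (K + max c 0 ^ 2) := by
  apply IsGreatest.csSup_eq
  constructor
  · refine ⟨max c 0, Set.mem_Ici.2 (le_max_right _ _), ?_⟩
    rcases le_total c 0 with h | h
    · rw [max_eq_right h]; ring
    · rw [max_eq_left h]; ring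
  · rintro x ⟨α, hα, rfl⟩
    have hα' : (0 : ℝ) ≤ α := hα
    have key : K + 2 * α * c - α ^ 2 ≤ K + max c 0 ^ 2 := by
      rcases le_total c 0 with h | h
      · rw [max_eq_right h]; nlinarith
      · rw [max_eq_left h]; nlinarith [sq_nonneg (α - c)]
    exact mul_le_mul_of_nonneg_left key hd.le

end Helpers

/-- Theorem 1 (min-max equivalence for the AUC margin loss): the infimum over `(a,b) ∈ ℝ²`
of `sup_{α ≥ 0} E_μ[F_M(a,b,α)]` equals `p(1−p)·A_M`, and this infimum is attained. -/
theorem minmax_AUC_margin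
    {Ω : Type*} [MeasurableSpace Ω] (μ : Measure Ω) [IsProbabilityMeasure μ]
    (A : Set Ω) (hA : MeasurableSet A)
    (p : ℝ) (hp : p = (μ A).toReal) (hp0 : 0 < p) (hp1 : p < 1)
    (S : Ω → ℝ) (hS : MemLp S 2 μ) (m : ℝ)
    (aS bS AM : ℝ)
    (haS : aS = ∫ ω, S ω ∂μ[|A]) (hbS : bS = ∫ ω, S ω ∂μ[|Aᶜ])
    (hAM : AM = (∫ ω, (S ω - aS) ^ 2 ∂μ[|A]) + (∫ ω, (S ω - bS) ^ 2 ∂μ[|Aᶜ])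
        + max (m + bS - aS) 0 ^ 2) :
    IsLeast (Set.range (fun ab : ℝ × ℝ =>
        sSup ((fun α : ℝ => ∫ ω, FM A p m S ab.1 ab.2 α ω ∂μ) '' Set.Ici 0)))
      (p * (1 - p) * AM) := by
  -- basic measure facts
  have hA0 : μ A ≠ 0 := by
    intro h
    rw [hp, h] at hp0
    simp at hp0
  have hAtop : μ A ≠ ⊤ := measure_ne_top μ A
  have hpAc : (μ Aᶜ).toReal = 1 - p := by
    rw [prob_compl_eq_one_sub hA,
      ENNReal.toReal_sub_of_le prob_le_one ENNReal.one_ne_top, ENNReal.toReal_one, hp]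
  have hAc0 : μ Aᶜ ≠ 0 := by
    intro h
    rw [h] at hpAc
    simp at hpAc
    linarith
  have hActop : μ Aᶜ ≠ ⊤ := measure_ne_top μ Aᶜ
  haveI : IsProbabilityMeasure μ[|A] := cond_isProbabilityMeasure hA0
  haveI : IsProbabilityMeasure μ[|Aᶜ] := cond_isProbabilityMeasure hAc0
  -- integrability
  have hSp : MemLp S 2 μ[|A] := memℒp_cond hA0 hS
  have hSm : MemLp S 2 μ[|Aᶜ] := memℒp_cond hAc0 hS
  have hIntS : Integrable S μ := hS.integrable one_le_two
  have hsq : ∀ b : ℝ, Integrable (fun ω => (S ω - b) ^ 2) μ := fun b =>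
    (hS.sub (memLp_const b)).integrable_sq
  -- the key integral formula
  have hInt : ∀ a b α : ℝ, ∫ ω, FM A p m S a b α ω ∂μ =
      p * (1 - p) * (((∫ ω, (S ω - a) ^ 2 ∂μ[|A]) + (∫ ω, (S ω - b) ^ 2 ∂μ[|Aᶜ]))
        + 2 * α * (m + bS - aS) - α ^ 2) := by
    intro a b α
    have e : (fun ω => FM A p m S a b α ω) = fun ω =>
        (1 - p) * ((S ω - a) ^ 2 * A.indicator 1 ω)
          + (p * ((S ω - b) ^ 2 * Aᶜ.indicator 1 ω)
          + ((2 * α * p) * (S ω * Aᶜ.indicator 1 ω)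
          + ((-(2 * α * (1 - p))) * (S ω * A.indicator 1 ω)
          + (2 * α * (p * (1 - p) * m) - p * (1 - p) * α ^ 2)))) := by
      funext ω
      simp only [FM]
      ring
    have i1 : Integrable (fun ω => (S ω - a) ^ 2 * A.indicator 1 ω) μ :=
      integrable_mul_indicator hA (hsq a)
    have i2 : Integrable (fun ω => (S ω - b) ^ 2 * Aᶜ.indicator 1 ω) μ :=
      integrable_mul_indicator hA.compl (hsq b)
    have i3 : Integrable (fun ω => S ω * Aᶜ.indicator 1 ω) μ :=
      integrable_mul_indicator hA.compl hIntS
    have i4 : Integrable (fun ω => S ω * A.indicator 1 ω) μ :=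
      integrable_mul_indicator hA hIntS
    have j4 : Integrable (fun ω => (-(2 * α * (1 - p))) * (S ω * A.indicator 1 ω)
        + (2 * α * (p * (1 - p) * m) - p * (1 - p) * α ^ 2)) μ :=
      (i4.const_mul _).add (integrable_const _)
    have j3 : Integrable (fun ω => (2 * α * p) * (S ω * Aᶜ.indicator 1 ω)
        + ((-(2 * α * (1 - p))) * (S ω * A.indicator 1 ω)
          + (2 * α * (p * (1 - p) * m) - p * (1 - p) * α ^ 2))) μ :=
      (i3.const_mul _).add j4
    have j2 : Integrable (fun ω => p * ((S ω - b) ^ 2 * Aᶜ.indicator 1 ω)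
        + ((2 * α * p) * (S ω * Aᶜ.indicator 1 ω)
          + ((-(2 * α * (1 - p))) * (S ω * A.indicator 1 ω)
            + (2 * α * (p * (1 - p) * m) - p * (1 - p) * α ^ 2)))) μ :=
      (i2.const_mul _).add j3
    rw [e, integral_add (i1.const_mul _) j2,
      integral_add (i2.const_mul _) j3,
      integral_add (i3.const_mul _) j4,
      integral_add (i4.const_mul _) (integrable_const _),
      integral_const_mul, integral_const_mul, integral_const_mul, integral_const_mul,
      integral_const, probReal_univ, smul_eq_mul,
      integral_mul_indicator' μ hA hA0 hAtop,
      integral_mul_indicator' μ hA.compl hAc0 hActop,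
      integral_mul_indicator' μ hA.compl hAc0 hActop,
      integral_mul_indicator' μ hA hA0 hAtop,
      ← haS, ← hbS, hpAc, ← hp]
    ring
  -- the sup over α ≥ 0
  have hd : (0 : ℝ) < p * (1 - p) := mul_pos hp0 (by linarith)
  have hG : ∀ a b : ℝ,
      sSup ((fun α : ℝ => ∫ ω, FM A p m S a b α ω ∂μ) '' Set.Ici 0) =
        p * (1 - p) * (((∫ ω, (S ω - a) ^ 2 ∂μ[|A]) + (∫ ω, (S ω - b) ^ 2 ∂μ[|Aᶜ]))
          + max (m + bS - aS) 0 ^ 2) := by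
    intro a b
    have : (fun α : ℝ => ∫ ω, FM A p m S a b α ω ∂μ) =
        fun α : ℝ => p * (1 - p) *
          (((∫ ω, (S ω - a) ^ 2 ∂μ[|A]) + (∫ ω, (S ω - b) ^ 2 ∂μ[|Aᶜ]))
            + 2 * α * (m + bS - aS) - α ^ 2) := funext fun α => hInt a b α
    rw [this, sSup_quadratic _ _ _ hd]
  constructor
  · refine ⟨(aS, bS), ?_⟩
    show sSup ((fun α : ℝ => ∫ ω, FM A p m S aS bS α ω ∂μ) '' Set.Ici 0) = p * (1 - p) * AM
    rw [hG aS bS, hAM]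
  · rintro x ⟨⟨a, b⟩, rfl⟩
    show p * (1 - p) * AM ≤
      sSup ((fun α : ℝ => ∫ ω, FM A p m S a b α ω ∂μ) '' Set.Ici 0)
    rw [hG a b, hAM]
    have h1 : (∫ ω, (S ω - aS) ^ 2 ∂μ[|A]) ≤ ∫ ω, (S ω - a) ^ 2 ∂μ[|A] := by
      rw [sq_integral_decomp μ[|A] hSp a aS haS]
      nlinarith [sq_nonneg (aS - a)]
    have h2 : (∫ ω, (S ω - bS) ^ 2 ∂μ[|Aᶜ]) ≤ ∫ ω, (S ω - b) ^ 2 ∂μ[|Aᶜ] := by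
      rw [sq_integral_decomp μ[|Aᶜ] hSm b bS hbS]
      nlinarith [sq_nonneg (bS - b)]
    exact mul_le_mul_of_nonneg_left (by linarith) hd.le
end

section
/- Attainment of the outer minimum in Theorem 1 at the conditional means: the pair (a(S), b(S)) attains the minimum in the min-max problem, i.e., sup_{α≥0} E_μ[F_M(a(S), b(S), α)] = p(1−p)·A_M, and for every (a,b) ∈ ℝ², sup_{α≥0} E_μ[F_M(a,b,α)] ≥ p(1−p)·A_M. -/
open MeasureTheory ProbabilityTheory

lemma var_le_aux {Ω : Type*} [MeasurableSpace Ω] (ν : Measure Ω) [IsProbabilityMeasure ν]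
    (S : Ω → ℝ) (hS : MemLp S 2 ν) (a : ℝ) :
    ∫ ω, (S ω - ∫ x, S x ∂ν) ^ 2 ∂ν ≤ ∫ ω, (S ω - a) ^ 2 ∂ν := by
  set c := ∫ x, S x ∂ν with hc
  have hSi : Integrable S ν := hS.integrable one_le_two
  have hS2 : Integrable (fun ω => S ω ^ 2) ν := hS.integrable_sq
  have hsq : ∀ d : ℝ, Integrable (fun ω => (S ω - d) ^ 2) ν := by
    intro d
    have : (fun ω => (S ω - d) ^ 2) = fun ω => S ω ^ 2 - 2 * d * S ω + d ^ 2 := by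
      funext ω; ring
    rw [this]
    exact (hS2.sub (hSi.const_mul _)).add (integrable_const _)
  have hzero : ∫ ω, (S ω - c) ∂ν = 0 := by
    rw [integral_sub hSi (integrable_const c), integral_const]
    simp [hc]
  have hexp : (fun ω => (S ω - a) ^ 2)
      = fun ω => (S ω - c) ^ 2 + (2 * (c - a)) * (S ω - c) + (c - a) ^ 2 := by
    funext ω; ring
  have hi2 : Integrable (fun ω => (2 * (c - a)) * (S ω - c)) ν :=
    (hSi.sub (integrable_const c)).const_mul _
  have h1 : ∫ ω, ((S ω - c) ^ 2 + 2 * (c - a) * (S ω - c) + (c - a) ^ 2) ∂ν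
      = ∫ ω, ((S ω - c) ^ 2 + 2 * (c - a) * (S ω - c)) ∂ν + ∫ _ω, ((c - a) ^ 2 : ℝ) ∂ν :=
    integral_add ((hsq c).add hi2) (integrable_const _)
  have h2 : ∫ ω, ((S ω - c) ^ 2 + 2 * (c - a) * (S ω - c)) ∂ν
      = ∫ ω, (S ω - c) ^ 2 ∂ν + ∫ ω, 2 * (c - a) * (S ω - c) ∂ν :=
    integral_add (hsq c) hi2
  have h3 : ∫ ω, 2 * (c - a) * (S ω - c) ∂ν = 2 * (c - a) * ∫ ω, (S ω - c) ∂ν :=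
    integral_const_mul _ _
  rw [hexp, h1, h2, h3, hzero, integral_const]
  simp only [measure_univ, probReal_univ, ENNReal.toReal_one, smul_eq_mul, one_mul, mul_zero, add_zero]
  nlinarith [sq_nonneg (c - a)]


/-- Attainment of the outer minimum in Theorem 1 at the conditional means:
`sup_{α≥0} E_μ[F_M(a(S), b(S), α)] = p(1−p)·A_M`, and for every `(a,b) ∈ ℝ²`,
`sup_{α≥0} E_μ[F_M(a,b,α)] ≥ p(1−p)·A_M`. -/
theorem minmax_AUC_margin_attained_at_conditional_means
    {Ω : Type*} [MeasurableSpace Ω] (μ : Measure Ω) [IsProbabilityMeasure μ]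
    (A : Set Ω) (hA : MeasurableSet A)
    (p : ℝ) (hp : p = (μ A).toReal) (hp0 : 0 < p) (hp1 : p < 1)
    (S : Ω → ℝ) (hS : MemLp S 2 μ) (m : ℝ)
    (aS bS AM : ℝ)
    (haS : aS = ∫ ω, S ω ∂μ[|A]) (hbS : bS = ∫ ω, S ω ∂μ[|Aᶜ])
    (hAM : AM = (∫ ω, (S ω - aS) ^ 2 ∂μ[|A]) + (∫ ω, (S ω - bS) ^ 2 ∂μ[|Aᶜ])
        + max (m + bS - aS) 0 ^ 2) :
    sSup ((fun α : ℝ => ∫ ω, FM A p m S aS bS α ω ∂μ) '' Set.Ici 0)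
        = p * (1 - p) * AM ∧
    ∀ a b : ℝ,
      p * (1 - p) * AM
        ≤ sSup ((fun α : ℝ => ∫ ω, FM A p m S a b α ω ∂μ) '' Set.Ici 0) := by
  -- basic measure facts
  have hA0 : μ A ≠ 0 := by
    intro h; rw [h] at hp; simp at hp; linarith
  have hpc : (μ Aᶜ).toReal = 1 - p := by
    rw [measure_compl hA (measure_ne_top μ A), measure_univ,
      ENNReal.toReal_sub_of_le prob_le_one ENNReal.one_ne_top, ENNReal.toReal_one, hp]
  have hAc0 : μ Aᶜ ≠ 0 := by
    intro h; rw [h] at hpc; simp at hpc; linarith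
  -- conditional integral formula
  have hcondint : ∀ (B : Set Ω) (f : Ω → ℝ),
      ∫ x, f x ∂μ[|B] = ((μ B).toReal)⁻¹ * ∫ x in B, f x ∂μ := by
    intro B f
    rw [ProbabilityTheory.cond, integral_smul_measure, ENNReal.toReal_inv, smul_eq_mul]
  -- integrability
  have hSi : Integrable S μ := hS.integrable one_le_two
  have hS2 : Integrable (fun ω => S ω ^ 2) μ := hS.integrable_sq
  have hsq : ∀ d : ℝ, Integrable (fun ω => (S ω - d) ^ 2) μ := by
    intro d
    have : (fun ω => (S ω - d) ^ 2) = fun ω => S ω ^ 2 - 2 * d * S ω + d ^ 2 := by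
      funext ω; ring
    rw [this]
    exact (hS2.sub (hSi.const_mul _)).add (integrable_const _)
  have key : ∀ a b α : ℝ, ∫ ω, FM A p m S a b α ω ∂μ
      = (1 - p) * (∫ ω in A, (S ω - a) ^ 2 ∂μ) + p * (∫ ω in Aᶜ, (S ω - b) ^ 2 ∂μ)
        - p * (1 - p) * α ^ 2
        + 2 * α * (p * (1 - p) * m + p * (∫ ω in Aᶜ, S ω ∂μ)
            - (1 - p) * (∫ ω in A, S ω ∂μ)) := by
    intro a b α
    have hfeq : (fun ω => FM A p m S a b α ω)
        = fun ω => (1 - p) * (A.indicator (fun x => (S x - a) ^ 2) ω)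
          + (p * (Aᶜ.indicator (fun x => (S x - b) ^ 2) ω)
          + ((2 * α * (p * (1 - p) * m) - p * (1 - p) * α ^ 2)
          + ((2 * α * p) * (Aᶜ.indicator S ω) + (-(2 * α * (1 - p))) * (A.indicator S ω)))) := by
      funext ω
      by_cases h : ω ∈ A <;> simp [FM, h, Set.indicator_of_mem, Set.indicator_of_notMem, Set.mem_compl_iff] <;> ring
    have i1 : Integrable (fun ω => (1 - p) * (A.indicator (fun x => (S x - a) ^ 2) ω)) μ :=
      (((hsq a).indicator hA)).const_mul _
    have i2 : Integrable (fun ω => p * (Aᶜ.indicator (fun x => (S x - b) ^ 2) ω)) μ :=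
      (((hsq b).indicator hA.compl)).const_mul _
    have i3 : Integrable (fun _ : Ω => (2 * α * (p * (1 - p) * m) - p * (1 - p) * α ^ 2)) μ :=
      integrable_const _
    have i4 : Integrable (fun ω => (2 * α * p) * (Aᶜ.indicator S ω)) μ :=
      (hSi.indicator hA.compl).const_mul _
    have i5 : Integrable (fun ω => (-(2 * α * (1 - p))) * (A.indicator S ω)) μ :=
      (hSi.indicator hA).const_mul _
    have e1 : ∫ ω, ((1 - p) * A.indicator (fun x => (S x - a) ^ 2) ω + (p * Aᶜ.indicator (fun x => (S x - b) ^ 2) ω + ((2 * α * (p * (1 - p) * m) - p * (1 - p) * α ^ 2) + (2 * α * p * Aᶜ.indicator S ω + -(2 * α * (1 - p)) * A.indicator S ω)))) ∂μ = ∫ ω, ((1 - p) * A.indicator (fun x => (S x - a) ^ 2) ω) ∂μ + ∫ ω, (p * Aᶜ.indicator (fun x => (S x - b) ^ 2) ω + ((2 * α * (p * (1 - p) * m) - p * (1 - p) * α ^ 2) + (2 * α * p * Aᶜ.indicator S ω + -(2 * α * (1 - p)) * A.indicator S ω))) ∂μ :=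
      integral_add i1 (i2.add (i3.add (i4.add i5)))
    have e2 : ∫ ω, (p * Aᶜ.indicator (fun x => (S x - b) ^ 2) ω + ((2 * α * (p * (1 - p) * m) - p * (1 - p) * α ^ 2) + (2 * α * p * Aᶜ.indicator S ω + -(2 * α * (1 - p)) * A.indicator S ω))) ∂μ = ∫ ω, (p * Aᶜ.indicator (fun x => (S x - b) ^ 2) ω) ∂μ + ∫ ω, ((2 * α * (p * (1 - p) * m) - p * (1 - p) * α ^ 2) + (2 * α * p * Aᶜ.indicator S ω + -(2 * α * (1 - p)) * A.indicator S ω)) ∂μ :=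
      integral_add i2 (i3.add (i4.add i5))
    have e3 : ∫ ω, ((2 * α * (p * (1 - p) * m) - p * (1 - p) * α ^ 2) + (2 * α * p * Aᶜ.indicator S ω + -(2 * α * (1 - p)) * A.indicator S ω)) ∂μ = ∫ ω, ((2 * α * (p * (1 - p) * m) - p * (1 - p) * α ^ 2)) ∂μ + ∫ ω, (2 * α * p * Aᶜ.indicator S ω + -(2 * α * (1 - p)) * A.indicator S ω) ∂μ :=
      integral_add i3 (i4.add i5)
    have e4 : ∫ ω, (2 * α * p * Aᶜ.indicator S ω + -(2 * α * (1 - p)) * A.indicator S ω) ∂μ = ∫ ω, (2 * α * p * Aᶜ.indicator S ω) ∂μ + ∫ ω, (-(2 * α * (1 - p)) * A.indicator S ω) ∂μ :=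
      integral_add i4 i5
    rw [hfeq]
    rw [e1, e2, e3, e4, integral_const_mul, integral_const_mul, integral_const_mul,
      integral_const_mul, integral_const]
    simp only [integral_indicator hA, integral_indicator hA.compl]
    simp only [measure_univ, probReal_univ, ENNReal.toReal_one, smul_eq_mul, one_mul]
    ring
  have h1p : (1 : ℝ) - p ≠ 0 := by linarith
  have hqpos : 0 < p * (1 - p) := mul_pos hp0 (by linarith)
  have hrev : ∀ f : Ω → ℝ, (∫ ω in A, f ω ∂μ) = p * ∫ ω, f ω ∂μ[|A] := by
    intro f; rw [hcondint A f, ← hp]; field_simp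
  have hrevc : ∀ f : Ω → ℝ, (∫ ω in Aᶜ, f ω ∂μ) = (1 - p) * ∫ ω, f ω ∂μ[|Aᶜ] := by
    intro f; rw [hcondint Aᶜ f, hpc]; field_simp
  have hISA : ∫ ω in A, S ω ∂μ = p * aS := by rw [hrev S, ← haS]
  have hISB : ∫ ω in Aᶜ, S ω ∂μ = (1 - p) * bS := by rw [hrevc S, ← hbS]
  have key2 : ∀ a b α : ℝ, ∫ ω, FM A p m S a b α ω ∂μ
      = (1 - p) * (∫ ω in A, (S ω - a) ^ 2 ∂μ) + p * (∫ ω in Aᶜ, (S ω - b) ^ 2 ∂μ)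
        - p * (1 - p) * α ^ 2 + 2 * α * (p * (1 - p) * (m + bS - aS)) := by
    intro a b α
    rw [key a b α, hISA, hISB]; ring
  have hgr : ∀ a b : ℝ, IsGreatest ((fun α : ℝ => ∫ ω, FM A p m S a b α ω ∂μ) '' Set.Ici 0)
      ((1 - p) * (∫ ω in A, (S ω - a) ^ 2 ∂μ) + p * (∫ ω in Aᶜ, (S ω - b) ^ 2 ∂μ)
        + p * (1 - p) * max (m + bS - aS) 0 ^ 2) := by
    intro a b
    constructor
    · refine ⟨max (m + bS - aS) 0, Set.mem_Ici.mpr (le_max_right _ _), ?_⟩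
      simp only
      rw [key2]
      rcases le_total (m + bS - aS) 0 with h | h
      · rw [max_eq_right h]; ring
      · rw [max_eq_left h]; ring
    · rintro x ⟨α, hα, rfl⟩
      rw [Set.mem_Ici] at hα
      simp only
      rw [key2]
      rcases le_total (m + bS - aS) 0 with h | h
      · rw [max_eq_right h]
        nlinarith [mul_nonneg hqpos.le (sq_nonneg α),
          mul_nonneg (mul_nonneg hqpos.le hα) (neg_nonneg.mpr h)]
      · rw [max_eq_left h]
        nlinarith [mul_nonneg hqpos.le (sq_nonneg (α - (m + bS - aS)))]
  have hsup : ∀ a b : ℝ, sSup ((fun α : ℝ => ∫ ω, FM A p m S a b α ω ∂μ) '' Set.Ici 0)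
      = (1 - p) * (∫ ω in A, (S ω - a) ^ 2 ∂μ) + p * (∫ ω in Aᶜ, (S ω - b) ^ 2 ∂μ)
        + p * (1 - p) * max (m + bS - aS) 0 ^ 2 :=
    fun a b => (hgr a b).csSup_eq
  -- conditional measures are probability measures, S ∈ L²
  have hPA : IsProbabilityMeasure (μ[|A]) := cond_isProbabilityMeasure hA0
  have hPAc : IsProbabilityMeasure (μ[|Aᶜ]) := cond_isProbabilityMeasure hAc0
  have hSA : MemLp S 2 (μ[|A]) :=
    (hS.restrict A).smul_measure (ENNReal.inv_ne_top.mpr hA0)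
  have hSAc : MemLp S 2 (μ[|Aᶜ]) :=
    (hS.restrict Aᶜ).smul_measure (ENNReal.inv_ne_top.mpr hAc0)
  have hvarA : ∀ a : ℝ, ∫ ω, (S ω - aS) ^ 2 ∂μ[|A] ≤ ∫ ω, (S ω - a) ^ 2 ∂μ[|A] := by
    intro a; rw [haS]; exact var_le_aux _ S hSA a
  have hvarB : ∀ b : ℝ, ∫ ω, (S ω - bS) ^ 2 ∂μ[|Aᶜ] ≤ ∫ ω, (S ω - b) ^ 2 ∂μ[|Aᶜ] := by
    intro b; rw [hbS]; exact var_le_aux _ S hSAc b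
  constructor
  · rw [hsup aS bS, hrev (fun ω => (S ω - aS) ^ 2), hrevc (fun ω => (S ω - bS) ^ 2), hAM]
    ring
  · intro a b
    rw [hsup a b, hrev (fun ω => (S ω - a) ^ 2), hrevc (fun ω => (S ω - b) ^ 2), hAM]
    nlinarith [mul_le_mul_of_nonneg_left (hvarA a) hqpos.le,
      mul_le_mul_of_nonneg_left (hvarB b) hqpos.le]
end

section
/- Optimal dual variable for the AUC margin loss: the function α ↦ E_μ[F_M(a(S), b(S), α)] on [0,∞) attains its supremum at the unique maximizer α* = max(m + b(S) − a(S), 0); in particular α* = m + b(S) − a(S) when m + b(S) − a(S) ≥ 0 and α* = 0 otherwise. -/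
open MeasureTheory ProbabilityTheory

/-- Optimal dual variable for the AUC margin loss: `α ↦ E_μ[F_M(a(S), b(S), α)]` on `[0,∞)`
attains its supremum at the unique maximizer `α* = max(m + b(S) − a(S), 0)`; in particular
`α* = m + b(S) − a(S)` when `m + b(S) − a(S) ≥ 0` and `α* = 0` otherwise. -/
theorem optimal_dual_AUC_margin
    {Ω : Type*} [MeasurableSpace Ω] (μ : Measure Ω) [IsProbabilityMeasure μ]
    (A : Set Ω) (hA : MeasurableSet A)
    (p : ℝ) (hp : p = (μ A).toReal) (hp0 : 0 < p) (hp1 : p < 1)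
    (S : Ω → ℝ) (hS : MemLp S 2 μ) (m : ℝ)
    (aS bS αstar : ℝ)
    (haS : aS = ∫ ω, S ω ∂μ[|A]) (hbS : bS = ∫ ω, S ω ∂μ[|Aᶜ])
    (hαstar : αstar = max (m + bS - aS) 0) :
    IsGreatest ((fun α : ℝ => ∫ ω, FM A p m S aS bS α ω ∂μ) '' Set.Ici 0)
        (∫ ω, FM A p m S aS bS αstar ω ∂μ) ∧
    (∀ α ∈ Set.Ici (0 : ℝ),
        (∫ ω, FM A p m S aS bS α ω ∂μ) = (∫ ω, FM A p m S aS bS αstar ω ∂μ) → α = αstar) ∧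
    (0 ≤ m + bS - aS → αstar = m + bS - aS) ∧
    (m + bS - aS < 0 → αstar = 0) := by
  have hAc : MeasurableSet Aᶜ := hA.compl
  have hSint : Integrable S μ := hS.integrable one_le_two
  have hμAfin : μ A ≠ ⊤ := (measure_ne_top μ A)
  have hμA0 : μ A ≠ 0 := by
    intro h
    rw [h] at hp
    simp at hp
    exact absurd hp (by linarith)
  have hpc : (μ Aᶜ).toReal = 1 - p := by
    rw [measure_compl hA hμAfin, measure_univ,
      ENNReal.toReal_sub_of_le prob_le_one ENNReal.one_ne_top]
    simp [hp]
  have hμAc0 : μ Aᶜ ≠ 0 := by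
    intro h
    rw [h] at hpc
    simp at hpc
    linarith
  -- conditional means as set integrals
  have hIA : ∫ ω in A, S ω ∂μ = p * aS := by
    rw [haS]
    unfold ProbabilityTheory.cond
    rw [integral_smul_measure, ENNReal.toReal_inv, smul_eq_mul, ← hp]
    field_simp
  have hIB : ∫ ω in Aᶜ, S ω ∂μ = (1 - p) * bS := by
    rw [hbS]
    unfold ProbabilityTheory.cond
    rw [integral_smul_measure, ENNReal.toReal_inv, smul_eq_mul, hpc]
    have : (1 : ℝ) - p ≠ 0 := by linarith
    field_simp
  set d : ℝ := m + bS - aS with hd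
  set G : Ω → ℝ := fun ω => (1 - p) * (S ω - aS) ^ 2 * A.indicator 1 ω
      + p * (S ω - bS) ^ 2 * Aᶜ.indicator 1 ω with hGdef
  set H : Ω → ℝ := fun ω => p * (1 - p) * m + p * S ω * Aᶜ.indicator 1 ω
      - (1 - p) * S ω * A.indicator 1 ω with hHdef
  clear_value d G H
  have hsq1 : Integrable (fun ω => (S ω - aS) ^ 2) μ := (hS.sub (memLp_const aS)).integrable_sq
  have hsq2 : Integrable (fun ω => (S ω - bS) ^ 2) μ := (hS.sub (memLp_const bS)).integrable_sq
  have hG : Integrable G μ := by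
    have hGeq : G = fun ω => A.indicator (fun ω => (1 - p) * (S ω - aS) ^ 2) ω
        + Aᶜ.indicator (fun ω => p * (S ω - bS) ^ 2) ω := by
      funext ω
      by_cases hω : ω ∈ A <;>
        simp [hGdef, Set.indicator_of_mem, Set.indicator_of_notMem, hω]
    rw [hGeq]
    exact ((hsq1.const_mul (1 - p)).indicator hA).add ((hsq2.const_mul p).indicator hAc)
  have h1 : Integrable (fun ω => p * (1 - p) * m
      + Aᶜ.indicator (fun ω => p * S ω) ω) μ := by
    exact (integrable_const _).add ((hSint.const_mul p).indicator hAc)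
  have h2 : Integrable (fun ω => A.indicator (fun ω => (1 - p) * S ω) ω) μ := by
    exact (hSint.const_mul (1 - p)).indicator hA
  have hHeq : H = fun ω => (p * (1 - p) * m + Aᶜ.indicator (fun ω => p * S ω) ω)
      - A.indicator (fun ω => (1 - p) * S ω) ω := by
    funext ω
    by_cases hω : ω ∈ A <;>
      simp [hHdef, Set.indicator_of_mem, Set.indicator_of_notMem, hω]
  have hH : Integrable H μ := by rw [hHeq]; exact h1.sub h2
  have hIH : ∫ ω, H ω ∂μ = p * (1 - p) * d := by
    rw [hHeq, integral_sub h1 h2,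
      integral_add (integrable_const _) ((hSint.const_mul p).indicator hAc),
      integral_indicator hAc, integral_indicator hA]
    simp only [integral_const_mul]
    rw [hIA, hIB]
    simp only [integral_const, measure_univ, ENNReal.toReal_one, one_smul, smul_eq_mul, probReal_univ]
    rw [hd]; ring
  -- main integral formula
  have key : ∀ α : ℝ, (∫ ω, FM A p m S aS bS α ω ∂μ)
      = (∫ ω, G ω ∂μ) + p * (1 - p) * (2 * α * d - α ^ 2) := by
    intro α
    have h3 : Integrable (fun ω => 2 * α * H ω - p * (1 - p) * α ^ 2) μ := by
      exact (hH.const_mul (2 * α)).sub (integrable_const _)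
    have hFM : (fun ω => FM A p m S aS bS α ω)
        = fun ω => G ω + (2 * α * H ω - p * (1 - p) * α ^ 2) := by
      funext ω
      simp only [FM, hGdef, hHdef]
      ring
    rw [hFM, integral_add hG h3,
      integral_sub (hH.const_mul (2 * α)) (integrable_const _), integral_const_mul, hIH]
    simp only [integral_const, measure_univ, ENNReal.toReal_one, one_smul, smul_eq_mul, probReal_univ]
    ring
  have hpq : 0 < p * (1 - p) := mul_pos hp0 (by linarith)
  have hα0 : 0 ≤ αstar := by rw [hαstar]; exact le_max_right _ _
  have qle : ∀ α : ℝ, 0 ≤ α → 2 * α * d - α ^ 2 ≤ 2 * αstar * d - αstar ^ 2 := by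
    intro α hα
    rcases le_or_gt 0 d with h | h
    · rw [hαstar, max_eq_left h]; nlinarith [sq_nonneg (α - d)]
    · rw [hαstar, max_eq_right h.le]; nlinarith
  refine ⟨⟨⟨αstar, hα0, rfl⟩, ?_⟩, ?_, ?_, ?_⟩
  · rintro x ⟨α, hα, rfl⟩
    dsimp only
    rw [key, key]
    have := qle α hα
    nlinarith
  · intro α hα heq
    rw [key, key] at heq
    have hq : 2 * α * d - α ^ 2 = 2 * αstar * d - αstar ^ 2 := by
      have := hpq.ne'
      nlinarith [qle α hα]
    have hα' : (0:ℝ) ≤ α := hα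
    rcases le_or_gt 0 d with h | h
    · rw [hαstar, max_eq_left h] at hq ⊢
      nlinarith [sq_nonneg (α - d)]
    · rw [hαstar, max_eq_right h.le] at hq ⊢
      nlinarith
  · intro h; rw [hαstar, max_eq_left h]
  · intro h; rw [hαstar, max_eq_right h.le]
end

section
/- Removing the non-negativity constraint on α recovers the margin square loss: E_{μ₊}[(S − a(S))²] + E_{μ₋}[(S − b(S))²] + sup_{α∈ℝ} (2α(m − a(S) + b(S)) − α²) = ∫∫ (m − s + t)² d(μ₊ ∘ S⁻¹)(s) d(μ₋ ∘ S⁻¹)(t), i.e., the AUC margin objective with unconstrained dual variable equals the pairwise square loss with margin m for independent positive and negative scores. -/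
open MeasureTheory ProbabilityTheory

private lemma moment_expand {Ω : Type*} [MeasurableSpace Ω] (ν : Measure Ω)
    [IsProbabilityMeasure ν] (S : Ω → ℝ) (h1 : Integrable S ν)
    (h2 : Integrable (fun ω => S ω ^ 2) ν) (u v : ℝ) :
    ∫ ω, (u + v * S ω) ^ 2 ∂ν
      = u ^ 2 + 2 * u * v * (∫ ω, S ω ∂ν) + v ^ 2 * ∫ ω, S ω ^ 2 ∂ν := by
  have : (fun ω => (u + v * S ω) ^ 2)
      = fun ω => u ^ 2 + (2 * u * v) * S ω + v ^ 2 * S ω ^ 2 := by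
    funext ω; ring
  rw [this]
  rw [integral_add (f := fun ω => u ^ 2 + 2 * u * v * S ω)
      (g := fun ω => v ^ 2 * S ω ^ 2)
      ((integrable_const _).add (h1.const_mul _)) (h2.const_mul _)]
  rw [integral_add (f := fun _ => u ^ 2) (g := fun ω => 2 * u * v * S ω)
      (integrable_const _) (h1.const_mul _)]
  rw [integral_const_mul, integral_const_mul, integral_const]
  simp

/-- Removing the non-negativity constraint on `α` recovers the margin square loss:
`E_{μP}[(S − a(S))²] + E_{μN}[(S − b(S))²] + sup_{α∈ℝ} (2α(m − a(S) + b(S)) − α²)`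
equals the pairwise square loss with margin `m` for independent positive and negative
scores, i.e. `∫∫ (m − s + t)² d(μP ∘ S⁻¹)(s) d(μN ∘ S⁻¹)(t)`. -/
theorem unconstrained_dual_recovers_margin_square_loss
    {Ω : Type*} [MeasurableSpace Ω] (μ : Measure Ω) [IsProbabilityMeasure μ]
    (A : Set Ω) (hA : MeasurableSet A)
    (p : ℝ) (hp : p = (μ A).toReal) (hp0 : 0 < p) (hp1 : p < 1)
    (S : Ω → ℝ) (hS : MemLp S 2 μ) (m : ℝ)
    (aS bS : ℝ)
    (haS : aS = ∫ ω, S ω ∂μ[|A]) (hbS : bS = ∫ ω, S ω ∂μ[|Aᶜ]) :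
    (∫ ω, (S ω - aS) ^ 2 ∂μ[|A]) + (∫ ω, (S ω - bS) ^ 2 ∂μ[|Aᶜ])
        + sSup (Set.range (fun α : ℝ => 2 * α * (m - aS + bS) - α ^ 2))
      = ∫ s, ∫ t, (m - s + t) ^ 2 ∂(Measure.map S μ[|Aᶜ]) ∂(Measure.map S μ[|A]) := by
  have hA0 : μ A ≠ 0 := by
    intro h; rw [hp, h] at hp0; simp at hp0
  have hAc0 : μ Aᶜ ≠ 0 := by
    intro h
    rw [prob_compl_eq_zero_iff hA] at h
    rw [hp, h] at hp1; simp at hp1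
  haveI hP : IsProbabilityMeasure (μ[|A]) := cond_isProbabilityMeasure hA0
  haveI hN : IsProbabilityMeasure (μ[|Aᶜ]) := cond_isProbabilityMeasure hAc0
  -- transfer Memℒp to conditional measures
  have hle : ∀ B : Set Ω, μ[|B] ≤ (μ B)⁻¹ • μ := by
    intro B s
    rw [ProbabilityTheory.cond, Measure.smul_apply, Measure.smul_apply,
      smul_eq_mul, smul_eq_mul]
    exact mul_le_mul_right (Measure.restrict_apply_le _ _) _
  have hmem : ∀ B : Set Ω, μ B ≠ 0 → MemLp S 2 (μ[|B]) := fun B hB =>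
    hS.of_measure_le_smul (ENNReal.inv_ne_top.2 hB) (hle B)
  have h1P : Integrable S (μ[|A]) := (hmem A hA0).integrable one_le_two
  have h1N : Integrable S (μ[|Aᶜ]) := (hmem Aᶜ hAc0).integrable one_le_two
  have h2P : Integrable (fun ω => S ω ^ 2) (μ[|A]) := (hmem A hA0).integrable_sq
  have h2N : Integrable (fun ω => S ω ^ 2) (μ[|Aᶜ]) := (hmem Aᶜ hAc0).integrable_sq
  have hmSP : AEMeasurable S (μ[|A]) :=
    hS.aestronglyMeasurable.aemeasurable.mono_ac cond_absolutelyContinuous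
  have hmSN : AEMeasurable S (μ[|Aᶜ]) :=
    hS.aestronglyMeasurable.aemeasurable.mono_ac cond_absolutelyContinuous
  set A2 : ℝ := ∫ ω, S ω ^ 2 ∂μ[|A] with hA2
  set B2 : ℝ := ∫ ω, S ω ^ 2 ∂μ[|Aᶜ] with hB2
  -- the supremum
  have hsup : sSup (Set.range (fun α : ℝ => 2 * α * (m - aS + bS) - α ^ 2))
      = (m - aS + bS) ^ 2 := by
    apply IsGreatest.csSup_eq
    constructor
    · exact ⟨m - aS + bS, by ring⟩
    · rintro x ⟨α, rfl⟩
      dsimp only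
      nlinarith [sq_nonneg (α - (m - aS + bS))]
  -- inner integral
  have hinner : ∀ s : ℝ, ∫ t, (m - s + t) ^ 2 ∂(Measure.map S μ[|Aᶜ])
      = ((m - s) + bS) ^ 2 + (B2 - bS ^ 2) := by
    intro s
    rw [integral_map hmSN (Continuous.aestronglyMeasurable (by continuity))]
    have : (fun ω => (m - s + S ω) ^ 2) = fun ω => ((m - s) + 1 * S ω) ^ 2 := by
      funext ω; ring
    rw [this, moment_expand _ _ h1N h2N, ← hbS]
    ring
  -- outer integral
  have houter : ∫ s, ∫ t, (m - s + t) ^ 2 ∂(Measure.map S μ[|Aᶜ])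
        ∂(Measure.map S μ[|A])
      = ∫ s, (((m + bS) + (-1) * s) ^ 2 + (B2 - bS ^ 2)) ∂(Measure.map S μ[|A]) := by
    apply integral_congr_ae
    filter_upwards with s
    rw [hinner s]; ring_nf
  rw [houter, integral_map hmSP (Continuous.aestronglyMeasurable (by continuity))]
  have hsplit : ∫ ω, (((m + bS) + (-1) * S ω) ^ 2 + (B2 - bS ^ 2)) ∂μ[|A]
      = ((m + bS) ^ 2 + 2 * (m + bS) * (-1) * aS + (-1 : ℝ) ^ 2 * A2)
        + (B2 - bS ^ 2) := by
    rw [integral_add ?_ (integrable_const _)]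
    · rw [moment_expand _ _ h1P h2P, ← haS]
      simp [hA2]
    · have : (fun ω => ((m + bS) + (-1) * S ω) ^ 2)
          = fun ω => (m + bS) ^ 2 + (-2 * (m + bS)) * S ω + 1 * S ω ^ 2 := by
        funext ω; ring
      rw [this]
      exact ((integrable_const _).add (h1P.const_mul _)).add (h2P.const_mul _)
  rw [hsplit, hsup]
  -- variances
  have hvP : ∫ ω, (S ω - aS) ^ 2 ∂μ[|A] = A2 - aS ^ 2 := by
    have : (fun ω => (S ω - aS) ^ 2) = fun ω => (-aS + 1 * S ω) ^ 2 := by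
      funext ω; ring
    rw [this, moment_expand _ _ h1P h2P, ← haS]; ring
  have hvN : ∫ ω, (S ω - bS) ^ 2 ∂μ[|Aᶜ] = B2 - bS ^ 2 := by
    have : (fun ω => (S ω - bS) ^ 2) = fun ω => (-bS + 1 * S ω) ^ 2 := by
      funext ω; ring
    rw [this, moment_expand _ _ h1N h2N, ← hbS]; ring
  rw [hvP, hvN]
  ring
end
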